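/- Let F be a field of characteristic 0, f ∈ F[w] a polynomial, and define the bivariate polynomial p(x,y) by (x − y)·p(x,y) = f(x) − f(y). Then for every pair of natural numbers (β,γ), the Hasse derivatives satisfy (∂̂_x − ∂̂_y) ∂̂_{x^β y^γ} p(x,y) = (x − y) · ∂̂_x ∂̂_y ∂̂_{x^β y^γ} p(x,y). -/

import Mathlib

open MvPolynomial

section FrechetAux

set_option linter.unusedSectionVars false

variable {F : Type*} [Field F] [CharZero F]

private lemma fhd_fe (i : Fin 2) :
    (fun r : MvPolynomial (Fin 2) F => pderiv i r) = ⇑(pderiv i) := rfl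

private lemma fhd_pd_aeval_ne (i j : Fin 2) (h : i ≠ j) (f : Polynomial F) :
    pderiv i (Polynomial.aeval (X j : MvPolynomial (Fin 2) F) f) = 0 := by
  induction f using Polynomial.induction_on' with
  | add p q hp hq => simp [hp, hq]
  | monomial n a =>
      simp [Polynomial.aeval_monomial, pderiv_C_mul, pderiv_pow, pderiv_X_of_ne h.symm]

private lemma fhd_pd_aeval_self (j : Fin 2) (f : Polynomial F) :
    pderiv j (Polynomial.aeval (X j : MvPolynomial (Fin 2) F) f) =
      Polynomial.aeval (X j : MvPolynomial (Fin 2) F) (Polynomial.derivative f) := by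
  induction f using Polynomial.induction_on' with
  | add p q hp hq => simp [hp, hq]
  | monomial n a =>
      simp [Polynomial.aeval_monomial, pderiv_C_mul, pderiv_pow, mul_comm, mul_assoc,
        mul_left_comm, Polynomial.derivative_monomial]

private lemma fhd_iter_sub (i : Fin 2) (n : ℕ) (a b : MvPolynomial (Fin 2) F) :
    (⇑(pderiv i))^[n] (a - b) = (⇑(pderiv i))^[n] a - (⇑(pderiv i))^[n] b := by
  induction n generalizing a b with
  | zero => simp
  | succ n ih => rw [Function.iterate_succ_apply, Function.iterate_succ_apply,
      Function.iterate_succ_apply, map_sub, ih]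

private lemma fhd_iter_zero (i : Fin 2) (n : ℕ) :
    (⇑(pderiv i))^[n] (0 : MvPolynomial (Fin 2) F) = 0 := by
  induction n with
  | zero => simp
  | succ n ih => rw [Function.iterate_succ_apply, map_zero, ih]

private lemma fhd_iter_smul (i : Fin 2) (n : ℕ) (c : F) (a : MvPolynomial (Fin 2) F) :
    (⇑(pderiv i))^[n] (c • a) = c • (⇑(pderiv i))^[n] a := by
  induction n generalizing a with
  | zero => simp
  | succ n ih => rw [Function.iterate_succ_apply, Function.iterate_succ_apply,
      (pderiv i).map_smul, ih]

private lemma fhd_iter_nsmul (i : Fin 2) (n k : ℕ) (a : MvPolynomial (Fin 2) F) :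
    (⇑(pderiv i))^[n] (k • a) = k • (⇑(pderiv i))^[n] a := by
  rw [← Nat.cast_smul_eq_nsmul F k a, ← Nat.cast_smul_eq_nsmul F k, fhd_iter_smul]

private lemma fhd_step0 (q : MvPolynomial (Fin 2) F) :
    pderiv (0 : Fin 2) ((X 0 - X 1) * q) = (X 0 - X 1) * pderiv 0 q + q := by
  rw [pderiv_mul]; simp [map_sub]; ring

private lemma fhd_step1 (q : MvPolynomial (Fin 2) F) :
    pderiv (1 : Fin 2) ((X 0 - X 1) * q) = (X 0 - X 1) * pderiv 1 q - q := by
  rw [pderiv_mul]; simp [map_sub]; ring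

private lemma fhd_iterD0 (n : ℕ) (q : MvPolynomial (Fin 2) F) :
    (⇑(pderiv (0 : Fin 2)))^[n+1] ((X 0 - X 1) * q)
      = (X 0 - X 1) * (⇑(pderiv (0 : Fin 2)))^[n+1] q
        + (n+1 : ℕ) • (⇑(pderiv (0 : Fin 2)))^[n] q := by
  induction n generalizing q with
  | zero => simpa using fhd_step0 q
  | succ n ih =>
      rw [Function.iterate_succ_apply' _ (n+1), ih, map_add, map_nsmul, fhd_step0,
        ← Function.iterate_succ_apply' (⇑(pderiv (0:Fin 2))) (n+1),
        ← Function.iterate_succ_apply' (⇑(pderiv (0:Fin 2))) n,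
        succ_nsmul ((⇑(pderiv (0:Fin 2)))^[n+1] q) (n+1)]
      abel

private lemma fhd_iterD1 (n : ℕ) (q : MvPolynomial (Fin 2) F) :
    (⇑(pderiv (1 : Fin 2)))^[n+1] ((X 0 - X 1) * q)
      = (X 0 - X 1) * (⇑(pderiv (1 : Fin 2)))^[n+1] q
        - (n+1 : ℕ) • (⇑(pderiv (1 : Fin 2)))^[n] q := by
  induction n generalizing q with
  | zero => simpa using fhd_step1 q
  | succ n ih =>
      rw [Function.iterate_succ_apply' _ (n+1), ih, map_sub, map_nsmul, fhd_step1,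
        ← Function.iterate_succ_apply' (⇑(pderiv (1:Fin 2))) (n+1),
        ← Function.iterate_succ_apply' (⇑(pderiv (1:Fin 2))) n,
        succ_nsmul ((⇑(pderiv (1:Fin 2)))^[n+1] q) (n+1)]
      abel

private lemma fhd_iter_aeval1 (m : ℕ) (f : Polynomial F) :
    (⇑(pderiv (1 : Fin 2)))^[m] (Polynomial.aeval (X 1 : MvPolynomial (Fin 2) F) f)
      = Polynomial.aeval (X 1 : MvPolynomial (Fin 2) F) ((⇑Polynomial.derivative)^[m] f) := by
  induction m generalizing f with
  | zero => simp
  | succ m ih =>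
      rw [Function.iterate_succ_apply, Function.iterate_succ_apply, fhd_pd_aeval_self, ih]

end FrechetAux

theorem frechet_hasse_derivative_identity
    {F : Type*} [Field F] [CharZero F]
    (f : Polynomial F) (p : MvPolynomial (Fin 2) F)
    (hp : (X 0 - X 1) * p =
        Polynomial.aeval (X 0 : MvPolynomial (Fin 2) F) f -
        Polynomial.aeval (X 1 : MvPolynomial (Fin 2) F) f)
    (H : ℕ → ℕ → MvPolynomial (Fin 2) F → MvPolynomial (Fin 2) F)
    (hH : ∀ β γ q, H β γ q =
        ((β.factorial * γ.factorial : F))⁻¹ •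
          ((fun r => pderiv (0 : Fin 2) r)^[β] ((fun r => pderiv (1 : Fin 2) r)^[γ] q))) :
    ∀ β γ : ℕ,
      H (β + 1) γ p - H β (γ + 1) p = (X 0 - X 1) * H (β + 1) (γ + 1) p := by
  intro β γ
  have hz : (⇑(pderiv (0:Fin 2)))^[β+1] ((⇑(pderiv (1:Fin 2)))^[γ+1] ((X 0 - X 1) * p)) = 0 := by
    rw [hp, fhd_iter_sub]
    rw [Function.iterate_succ_apply (⇑(pderiv (1:Fin 2))) γ, fhd_pd_aeval_ne 1 0 (by decide),
      fhd_iter_zero, fhd_iter_aeval1]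
    rw [fhd_iter_sub, fhd_iter_zero,
      Function.iterate_succ_apply (⇑(pderiv (0:Fin 2))) β, fhd_pd_aeval_ne 0 1 (by decide),
      fhd_iter_zero]
    simp
  rw [fhd_iterD1, fhd_iter_sub, fhd_iterD0, fhd_iter_nsmul] at hz
  rw [sub_eq_zero] at hz
  simp only [← Nat.cast_smul_eq_nsmul F] at hz
  have h2 : (X 0 - X 1) * (⇑(pderiv (0:Fin 2)))^[β+1] ((⇑(pderiv (1:Fin 2)))^[γ+1] p)
      = ((γ+1 : ℕ) : F) • (⇑(pderiv (0:Fin 2)))^[β+1] ((⇑(pderiv (1:Fin 2)))^[γ] p)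
        - ((β+1 : ℕ) : F) • (⇑(pderiv (0:Fin 2)))^[β] ((⇑(pderiv (1:Fin 2)))^[γ+1] p) := by
    rw [eq_sub_iff_add_eq]; exact hz
  have hfac : ∀ m : ℕ, ((m.factorial : F)) ≠ 0 :=
    fun m => Nat.cast_ne_zero.mpr (Nat.factorial_ne_zero m)
  have hb : ∀ m : ℕ, ((m+1 : ℕ) : F) ≠ 0 := fun m => Nat.cast_ne_zero.mpr (Nat.succ_ne_zero m)
  have hc1 : ((((β+1).factorial : F)) * ((γ+1).factorial : F))⁻¹ * ((γ+1 : ℕ) : F)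
      = (((β+1).factorial : F) * (γ.factorial : F))⁻¹ := by
    have h1 : (((γ+1).factorial : ℕ) : F) = ((γ+1:ℕ):F) * ((γ.factorial : ℕ) : F) := by
      rw [Nat.factorial_succ]; push_cast; ring
    rw [h1, show (((β+1).factorial : F)) * (((γ+1:ℕ):F) * ((γ.factorial:ℕ):F))
        = ((γ+1:ℕ):F) * (((β+1).factorial : F) * (γ.factorial : F)) from by ring,
      mul_inv, mul_comm (((γ+1:ℕ):F))⁻¹, mul_assoc, inv_mul_cancel₀ (hb γ), mul_one]
  have hc2 : ((((β+1).factorial : F)) * ((γ+1).factorial : F))⁻¹ * ((β+1 : ℕ) : F)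
      = ((β.factorial : F) * ((γ+1).factorial : F))⁻¹ := by
    have h1 : (((β+1).factorial : ℕ) : F) = ((β+1:ℕ):F) * ((β.factorial : ℕ) : F) := by
      rw [Nat.factorial_succ]; push_cast; ring
    rw [h1, show (((β+1:ℕ):F) * ((β.factorial:ℕ):F)) * (((γ+1).factorial : F))
        = ((β+1:ℕ):F) * ((β.factorial : F) * ((γ+1).factorial : F)) from by ring,
      mul_inv, mul_comm (((β+1:ℕ):F))⁻¹, mul_assoc, inv_mul_cancel₀ (hb β), mul_one]
  rw [hH, hH, hH, fhd_fe, fhd_fe]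
  rw [mul_smul_comm, h2, smul_sub, smul_smul, smul_smul, hc1, hc2]
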